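/- For every (a,b) with 1 ≤ a ≤ 2, 1 ≤ b < 2, ab < 2 (and 1 + a − ab ≠ 0), the Jacobian determinant of H_Δ(a,b) = (a⁴, (−2 + b + ab)/(a²(1 + a − ab))) equals 4a(a² + 1)/(1 + a − ab)², and this determinant is strictly greater than 4. -/

import Mathlib

/-- The renormalization operator H_Δ. -/
noncomputable def HDelta (p : ℝ × ℝ) : ℝ × ℝ :=
  (p.1 ^ 4, (-2 + p.2 + p.1 * p.2) / (p.1 ^ 2 * (1 + p.1 - p.1 * p.2)))

theorem HDelta_jacobian_det (a b : ℝ) (ha1 : 1 ≤ a) (ha2 : a ≤ 2)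
    (hb1 : 1 ≤ b) (hb2 : b < 2) (hab : a * b < 2) (hd : 1 + a - a * b ≠ 0) :
    ∃ L : ℝ × ℝ →L[ℝ] ℝ × ℝ, HasFDerivAt HDelta L (a, b) ∧
      LinearMap.det (L : ℝ × ℝ →ₗ[ℝ] ℝ × ℝ) =
        4 * a * (a ^ 2 + 1) / (1 + a - a * b) ^ 2 ∧
      4 < LinearMap.det (L : ℝ × ℝ →ₗ[ℝ] ℝ × ℝ) := by
  have ha0 : (0:ℝ) < a := lt_of_lt_of_le one_pos ha1
  have hDne : a ^ 2 * (1 + a - a * b) ≠ 0 := mul_ne_zero (pow_ne_zero 2 (ne_of_gt ha0)) hd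
  have hfst : HasFDerivAt (fun p : ℝ × ℝ => p.1) (ContinuousLinearMap.fst ℝ ℝ ℝ) (a, b) :=
    hasFDerivAt_fst
  have hsnd : HasFDerivAt (fun p : ℝ × ℝ => p.2) (ContinuousLinearMap.snd ℝ ℝ ℝ) (a, b) :=
    hasFDerivAt_snd
  have hf := (hfst.mul hfst).mul (hfst.mul hfst)
  simp only [Pi.mul_def] at hf
  rw [show (fun p : ℝ × ℝ => p.1 * p.1 * (p.1 * p.1)) = (fun p : ℝ × ℝ => p.1 ^ 4) from
    funext fun p => by ring] at hf
  have hN := ((hasFDerivAt_const (-2:ℝ) ((a,b) : ℝ × ℝ)).add hsnd).add (hfst.mul hsnd)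
  have hD := (hfst.mul hfst).mul (((hasFDerivAt_const (1:ℝ) ((a,b) : ℝ × ℝ)).add hfst).sub
    (hfst.mul hsnd))
  simp only [Pi.mul_def, Pi.add_def, Pi.sub_def] at hN hD
  rw [show (fun p : ℝ × ℝ => p.1 * p.1 * (1 + p.1 - p.1 * p.2)) =
      (fun p : ℝ × ℝ => p.1 ^ 2 * (1 + p.1 - p.1 * p.2)) from
    funext fun p => by ring] at hD
  have hinv := (hasFDerivAt_inv hDne).comp ((a,b) : ℝ × ℝ) hD
  have hg := hN.mul hinv
  simp only [Pi.mul_def, Pi.add_def, Pi.sub_def] at hg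
  rw [show (fun p : ℝ × ℝ => (-2 + p.2 + p.1 * p.2) * ((fun x => x⁻¹) ∘
      fun p : ℝ × ℝ => p.1 ^ 2 * (1 + p.1 - p.1 * p.2)) p) =
      (fun p : ℝ × ℝ => (-2 + p.2 + p.1 * p.2) / (p.1 ^ 2 * (1 + p.1 - p.1 * p.2))) from
    funext fun p => by simp [div_eq_mul_inv]] at hg
  have hH := HasFDerivAt.prodMk hf hg
  rw [show (fun p : ℝ × ℝ => (p.1 ^ 4,
      (-2 + p.2 + p.1 * p.2) / (p.1 ^ 2 * (1 + p.1 - p.1 * p.2)))) = HDelta from rfl] at hH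
  have key : ∀ L : ℝ × ℝ →L[ℝ] ℝ × ℝ,
      LinearMap.det (L : ℝ × ℝ →ₗ[ℝ] ℝ × ℝ) = 4 * a * (a ^ 2 + 1) / (1 + a - a * b) ^ 2 →
      LinearMap.det (L : ℝ × ℝ →ₗ[ℝ] ℝ × ℝ) = 4 * a * (a ^ 2 + 1) / (1 + a - a * b) ^ 2 ∧
      4 < LinearMap.det (L : ℝ × ℝ →ₗ[ℝ] ℝ × ℝ) := by
    intro L h
    refine ⟨h, ?_⟩
    rw [h]
    have hu0 : 0 < 1 + a - a * b := by nlinarith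
    have hu1 : 1 + a - a * b ≤ 1 := by nlinarith
    rw [lt_div_iff₀ (pow_pos hu0 2)]
    nlinarith [sq_nonneg (1 + a - a * b), mul_pos hu0 hu0]
  refine ⟨_, hH, key _ ?_⟩
  rw [← LinearMap.det_toMatrix (Module.Basis.finTwoProd ℝ), Matrix.det_fin_two]
  simp [LinearMap.toMatrix_apply, Module.Basis.finTwoProd_zero, Module.Basis.finTwoProd_one,
    Function.comp]
  field_simp
  ring
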